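/- Let T be a monad on a category C with unit η and multiplication μ. Suppose given functors a₁^*, a₂^* : C → C₂ and Δ^* : C₂ → C with Δ^* a₁^* = Δ^* a₂^* = Id, the map ξ(φ) = a₂^*(φ) ∘ a₁^*(η_M) for φ : T M ⟶ N, functors b₁^*, b₃^* : C → C₃ and maps α₁₂, α₁₃, α₂₃ from Hom(a₁^* M, a₂^* N) to hom-sets in C₃, and an injective map ρ : Hom_C(T T M, N) → Hom_{C₃}(b₁^* M, b₃^* N) satisfying: (i) ρ(ψ ∘ T φ') = α₂₃(ξ(ψ')) ∘ α₁₂(ξ(φ'')) whenever ψ = φ₂₃ ∘ T φ₁₂ (the 'cocycle composition' identity of Lemma l2), and (ii) ρ(φ ∘ μ_M) = α₁₃(ξ(φ)). Then for φ : T M ⟶ M, the associativity condition φ ∘ T φ = φ ∘ μ_M holds if and only if α₁₃(ξ(φ)) = α₂₃(ξ(φ)) ∘ α₁₂(ξ(φ)) (the cocycle/pre-descent condition). -/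
import Mathlib

open CategoryTheory

/-- Abstract form of Proposition 1 / Corollary 1 of the paper: given a monad `T` on `C`,
functors `a₁^*, a₂^*, Δ^*` with `Δ^* a₁^* = Δ^* a₂^* = Id`, a family
`ξ : Hom(T M, N) → Hom(a₁^* M, a₂^* N)`, functors `b₁^*, b₂^*, b₃^*` and maps `α₁₂, α₁₃, α₂₃`
to hom-sets in `C₃`, and an injective map `ρ : Hom(T T M, N) → Hom(b₁^* M, b₃^* N)` satisfying
(i) `ρ(φ₂₃ ∘ T φ₁₂) = α₂₃(ξ φ₂₃) ∘ α₁₂(ξ φ₁₂)` and (ii) `ρ(φ ∘ μ_M) = α₁₃(ξ φ)`, then for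
`φ : T M ⟶ M`, associativity `φ ∘ T φ = φ ∘ μ_M` holds iff the pre-descent cocycle condition
`α₁₃(ξ φ) = α₂₃(ξ φ) ∘ α₁₂(ξ φ)` holds. -/
theorem associativity_iff_predescent
    {C C₂ C₃ : Type*} [Category C] [Category C₂] [Category C₃]
    (T : Monad C)
    (a1star a2star : C ⥤ C₂) (Δstar : C₂ ⥤ C)
    (hΔ1 : a1star ⋙ Δstar = 𝟭 C) (hΔ2 : a2star ⋙ Δstar = 𝟭 C)
    (b1star b2star b3star : C ⥤ C₃)
    (ξ : ∀ {M N : C}, ((T : C ⥤ C).obj M ⟶ N) → (a1star.obj M ⟶ a2star.obj N))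
    (α₁₂ : ∀ {M N : C}, (a1star.obj M ⟶ a2star.obj N) → (b1star.obj M ⟶ b2star.obj N))
    (α₁₃ : ∀ {M N : C}, (a1star.obj M ⟶ a2star.obj N) → (b1star.obj M ⟶ b3star.obj N))
    (α₂₃ : ∀ {M N : C}, (a1star.obj M ⟶ a2star.obj N) → (b2star.obj M ⟶ b3star.obj N))
    (ρ : ∀ {M N : C}, ((T : C ⥤ C).obj ((T : C ⥤ C).obj M) ⟶ N) →
        (b1star.obj M ⟶ b3star.obj N))
    (hρ : ∀ M N : C, Function.Injective (ρ (M := M) (N := N)))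
    (hcomp : ∀ {M N P : C} (φ₁₂ : (T : C ⥤ C).obj M ⟶ N) (φ₂₃ : (T : C ⥤ C).obj N ⟶ P),
      ρ ((T : C ⥤ C).map φ₁₂ ≫ φ₂₃) = α₁₂ (ξ φ₁₂) ≫ α₂₃ (ξ φ₂₃))
    (hmul : ∀ {M N : C} (φ : (T : C ⥤ C).obj M ⟶ N),
      ρ (T.μ.app M ≫ φ) = α₁₃ (ξ φ))
    (M : C) (φ : (T : C ⥤ C).obj M ⟶ M) :
    (T : C ⥤ C).map φ ≫ φ = T.μ.app M ≫ φ ↔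
      α₁₃ (ξ φ) = α₁₂ (ξ φ) ≫ α₂₃ (ξ φ) := by
  constructor
  · intro h
    rw [← hmul φ, ← h, hcomp]
  · intro h
    apply hρ
    rw [hcomp, ← h, hmul]
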